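/- arXiv:1506.04681 — 7 statements merged into one kernel-verified Lean document; each statement's English description precedes it below -/
import Mathlib

section
/- Let h_1, ..., h_n : ℝ → ℝ be convex, continuously differentiable functions and let f ≤ n. Define F(x) as the minimum over subsets F₁ of A(x) = {i : h_i'(x) > 0} with |F₁| ≤ f of the sum of h_i'(x) over i ∈ A(x) \ F₁. Then F is a non-decreasing function of x. -/
open scoped Classical

theorem trimmed_positive_gradient_sum_monotone
    (n f : ℕ) (hf : f ≤ n) (h : Fin n → ℝ → ℝ)
    (hconv : ∀ i, ConvexOn ℝ Set.univ (h i))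
    (hsmooth : ∀ i, ContDiff ℝ 1 (h i))
    (F : ℝ → ℝ)
    (hF : ∀ x : ℝ,
      IsLeast {s : ℝ | ∃ F₁ : Finset (Fin n),
        F₁ ⊆ Finset.univ.filter (fun i => 0 < deriv (h i) x) ∧ F₁.card ≤ f ∧
        s = ∑ i ∈ (Finset.univ.filter (fun i => 0 < deriv (h i) x)) \ F₁, deriv (h i) x}
        (F x)) :
    Monotone F := by
  have hd : ∀ i, Monotone (deriv (h i)) := by
    intro i
    have := (hconv i).monotoneOn_deriv (fun a _ => ((hsmooth i).differentiable one_ne_zero).differentiableAt)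
    intro a b hab
    exact this (Set.mem_univ a) (Set.mem_univ b) hab
  intro x y hxy
  obtain ⟨F₁, hF₁sub, hF₁card, hF₁sum⟩ := (hF y).1
  set Ax := Finset.univ.filter (fun i => 0 < deriv (h i) x) with hAx
  set Ay := Finset.univ.filter (fun i => 0 < deriv (h i) y) with hAy
  have hAsub : Ax ⊆ Ay := by
    intro i hi
    simp only [hAx, hAy, Finset.mem_filter, Finset.mem_univ, true_and] at hi ⊢
    exact lt_of_lt_of_le hi (hd i hxy)
  -- competitor at x: F₁ ∩ Ax
  have hmem : (∑ i ∈ Ax \ (F₁ ∩ Ax), deriv (h i) x) ∈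
      {s : ℝ | ∃ F₂ : Finset (Fin n),
        F₂ ⊆ Ax ∧ F₂.card ≤ f ∧ s = ∑ i ∈ Ax \ F₂, deriv (h i) x} := by
    exact ⟨F₁ ∩ Ax, Finset.inter_subset_right,
      le_trans (Finset.card_le_card Finset.inter_subset_left) hF₁card, rfl⟩
  have hle1 : F x ≤ ∑ i ∈ Ax \ (F₁ ∩ Ax), deriv (h i) x := (hF x).2 hmem
  have hdiffeq : Ax \ (F₁ ∩ Ax) = Ax \ F₁ := by
    ext i; simp only [Finset.mem_sdiff, Finset.mem_inter]; tauto
  have hle2 : (∑ i ∈ Ax \ F₁, deriv (h i) x) ≤ ∑ i ∈ Ax \ F₁, deriv (h i) y :=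
    Finset.sum_le_sum (fun i _ => hd i hxy)
  have hle3 : (∑ i ∈ Ax \ F₁, deriv (h i) y) ≤ ∑ i ∈ Ay \ F₁, deriv (h i) y := by
    apply Finset.sum_le_sum_of_subset_of_nonneg
    · exact Finset.sdiff_subset_sdiff hAsub le_rfl
    · intro i hi _
      have : i ∈ Ay := (Finset.mem_sdiff.mp hi).1
      simp only [hAy, Finset.mem_filter] at this
      exact le_of_lt this.2
  calc F x ≤ ∑ i ∈ Ax \ (F₁ ∩ Ax), deriv (h i) x := hle1
    _ = ∑ i ∈ Ax \ F₁, deriv (h i) x := by rw [hdiffeq]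
    _ ≤ ∑ i ∈ Ax \ F₁, deriv (h i) y := hle2
    _ ≤ ∑ i ∈ Ay \ F₁, deriv (h i) y := hle3
    _ = F y := hF₁sum.symm
end

section
/- Let h_1, ..., h_n : ℝ → ℝ be convex, continuously differentiable functions and let f ≤ n. Define G(x) as the maximum over subsets F₂ of B(x) = {i : h_i'(x) < 0} with |F₂| ≤ f of the sum of h_i'(x) over i ∈ B(x) \ F₂. Then G is a non-decreasing function of x. -/
open scoped Classical

theorem trimmed_negative_gradient_sum_monotone
    (n f : ℕ) (hf : f ≤ n) (h : Fin n → ℝ → ℝ)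
    (hconv : ∀ i, ConvexOn ℝ Set.univ (h i))
    (hsmooth : ∀ i, ContDiff ℝ 1 (h i))
    (G : ℝ → ℝ)
    (hG : ∀ x : ℝ,
      IsGreatest {s : ℝ | ∃ F₂ : Finset (Fin n),
        F₂ ⊆ Finset.univ.filter (fun i => deriv (h i) x < 0) ∧ F₂.card ≤ f ∧
        s = ∑ i ∈ (Finset.univ.filter (fun i => deriv (h i) x < 0)) \ F₂, deriv (h i) x}
        (G x)) :
    Monotone G := by
  have hd : ∀ i, Monotone (deriv (h i)) := by
    intro i
    have := (hconv i).monotoneOn_deriv (fun x _ =>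
      ((hsmooth i).differentiable one_ne_zero).differentiableAt)
    exact monotoneOn_univ.mp this
  intro x y hxy
  obtain ⟨⟨F₂, hsub, hcard, hval⟩, _⟩ := hG x
  set Bx := Finset.univ.filter (fun i => deriv (h i) x < 0) with hBx
  set By := Finset.univ.filter (fun i => deriv (h i) y < 0) with hBy
  have hBsub : By ⊆ Bx := by
    intro i hi
    simp only [hBx, hBy, Finset.mem_filter, Finset.mem_univ, true_and] at *
    exact lt_of_le_of_lt (hd i hxy) hi
  -- candidate at y
  have hcand : (∑ i ∈ By \ (F₂ ∩ By), deriv (h i) y) ∈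
      {s : ℝ | ∃ F₂ : Finset (Fin n),
        F₂ ⊆ Finset.univ.filter (fun i => deriv (h i) y < 0) ∧ F₂.card ≤ f ∧
        s = ∑ i ∈ (Finset.univ.filter (fun i => deriv (h i) y < 0)) \ F₂, deriv (h i) y} := by
    exact ⟨F₂ ∩ By, Finset.inter_subset_right, le_trans
      (Finset.card_le_card Finset.inter_subset_left) hcard, rfl⟩
  have hle := (hG y).2 hcand
  refine le_trans ?_ hle
  rw [hval]
  have h1 : By \ (F₂ ∩ By) = By \ F₂ := by
    ext i; simp [Finset.mem_sdiff, Finset.mem_inter, and_comm]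
  rw [h1]
  have h2 : By \ F₂ ⊆ Bx \ F₂ := Finset.sdiff_subset_sdiff hBsub le_rfl
  calc ∑ i ∈ Bx \ F₂, deriv (h i) x
      ≤ ∑ i ∈ By \ F₂, deriv (h i) x := by
        rw [← Finset.sum_sdiff h2]
        have hnp : ∑ i ∈ (Bx \ F₂) \ (By \ F₂), deriv (h i) x ≤ 0 := by
          apply Finset.sum_nonpos
          intro i hi
          have := (Finset.mem_sdiff.mp hi).1
          have := (Finset.mem_sdiff.mp this).1
          simp only [hBx, Finset.mem_filter] at this
          exact this.2.le
        linarith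
    _ ≤ ∑ i ∈ By \ F₂, deriv (h i) y :=
        Finset.sum_le_sum fun i _ => hd i hxy
end

section
/- Let h_1, ..., h_n : ℝ → ℝ be convex, continuously differentiable functions and let f ≤ n. The function F(x) = min over subsets F₁ ⊆ A(x) with |F₁| ≤ f of Σ_{i ∈ A(x) − F₁} h_i'(x), where A(x) = {i : h_i'(x) > 0}, is continuous on ℝ. -/
open scoped Classical

theorem trimmed_positive_gradient_sum_continuous
    (n f : ℕ) (hf : f ≤ n) (h : Fin n → ℝ → ℝ)
    (hconv : ∀ i, ConvexOn ℝ Set.univ (h i))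
    (hsmooth : ∀ i, ContDiff ℝ 1 (h i))
    (F : ℝ → ℝ)
    (hF : ∀ x : ℝ,
      IsLeast {s : ℝ | ∃ F₁ : Finset (Fin n),
        F₁ ⊆ Finset.univ.filter (fun i => 0 < deriv (h i) x) ∧ F₁.card ≤ f ∧
        s = ∑ i ∈ (Finset.univ.filter (fun i => 0 < deriv (h i) x)) \ F₁, deriv (h i) x}
        (F x)) :
    Continuous F := by
  set g : Fin n → ℝ → ℝ := fun i x => max (deriv (h i) x) 0 with hgdef
  have hgc : ∀ i, Continuous (g i) :=
    fun i => ((hsmooth i).continuous_deriv le_rfl).max continuous_const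
  set S : Finset (Finset (Fin n)) := Finset.univ.filter (fun F₁ => F₁.card ≤ f) with hSdef
  have hSne : S.Nonempty := ⟨∅, by simp [hSdef]⟩
  set m : ℝ → ℝ := fun x => S.inf' hSne (fun F₁ => ∑ i ∈ Finset.univ \ F₁, g i x) with hmdef
  -- key sum identity
  have sum_eq : ∀ (x : ℝ) (F₁ : Finset (Fin n)),
      ∑ i ∈ (Finset.univ.filter (fun i => 0 < deriv (h i) x)) \ F₁, deriv (h i) x
        = ∑ i ∈ Finset.univ \ F₁, g i x := by
    intro x F₁
    have h1 : ∑ i ∈ (Finset.univ.filter (fun i => 0 < deriv (h i) x)) \ F₁, deriv (h i) x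
        = ∑ i ∈ (Finset.univ.filter (fun i => 0 < deriv (h i) x)) \ F₁, g i x := by
      refine Finset.sum_congr rfl fun i hi => ?_
      have : 0 < deriv (h i) x := (Finset.mem_filter.1 (Finset.mem_sdiff.1 hi).1).2
      simp [hgdef, max_eq_left this.le]
    rw [h1]
    refine Finset.sum_subset ?_ ?_
    · intro i hi
      rcases Finset.mem_sdiff.1 hi with ⟨_, h2⟩
      exact Finset.mem_sdiff.2 ⟨Finset.mem_univ _, h2⟩
    · intro i hi hni
      have : ¬ 0 < deriv (h i) x := by
        intro hpos
        exact hni (Finset.mem_sdiff.2 ⟨Finset.mem_filter.2 ⟨Finset.mem_univ _, hpos⟩,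
          (Finset.mem_sdiff.1 hi).2⟩)
      simp [hgdef, max_eq_right (not_lt.1 this)]
  have key : ∀ x, F x = m x := by
    intro x
    refine (hF x).unique ?_
    constructor
    · -- membership
      obtain ⟨F₁, hF₁S, hF₁eq⟩ := Finset.exists_mem_eq_inf' hSne
        (fun F₁ => ∑ i ∈ Finset.univ \ F₁, g i x)
      have hcard : F₁.card ≤ f := (Finset.mem_filter.1 hF₁S).2
      set A := Finset.univ.filter (fun i => 0 < deriv (h i) x) with hA
      refine ⟨F₁ ∩ A, Finset.inter_subset_right, le_trans (Finset.card_le_card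
        Finset.inter_subset_left) hcard, ?_⟩
      have hAd : A \ (F₁ ∩ A) = A \ F₁ := by
        ext i; simp [Finset.mem_sdiff]
      rw [hAd, sum_eq x F₁, hmdef]
      exact hF₁eq
    · -- lower bound
      rintro s ⟨F₁, hsub, hcard, rfl⟩
      rw [sum_eq x F₁]
      exact Finset.inf'_le _ (by simp [hSdef, hcard])
  have : F = m := funext key
  rw [this]
  exact Continuous.finset_inf'_apply hSne fun F₁ _ =>
    continuous_finset_sum _ fun i _ => hgc i
end

section
/- Let h_1, ..., h_n : ℝ → ℝ be convex, continuously differentiable functions and let f ≤ n. The function G(x) = max over subsets F₂ ⊆ B(x) with |F₂| ≤ f of Σ_{i ∈ B(x) − F₂} h_i'(x), where B(x) = {i : h_i'(x) < 0}, is continuous on ℝ. -/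
open scoped Classical

theorem trimmed_negative_gradient_sum_continuous
    (n f : ℕ) (hf : f ≤ n) (h : Fin n → ℝ → ℝ)
    (hconv : ∀ i, ConvexOn ℝ Set.univ (h i))
    (hsmooth : ∀ i, ContDiff ℝ 1 (h i))
    (G : ℝ → ℝ)
    (hG : ∀ x : ℝ,
      IsGreatest {s : ℝ | ∃ F₂ : Finset (Fin n),
        F₂ ⊆ Finset.univ.filter (fun i => deriv (h i) x < 0) ∧ F₂.card ≤ f ∧
        s = ∑ i ∈ (Finset.univ.filter (fun i => deriv (h i) x < 0)) \ F₂, deriv (h i) x}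
        (G x)) :
    Continuous G := by
  set S : Finset (Finset (Fin n)) := Finset.univ.filter (fun F => F.card ≤ f) with hS
  have hSne : S.Nonempty := ⟨∅, by simp [hS]⟩
  set g : Finset (Fin n) → ℝ → ℝ :=
    fun F x => ∑ i ∈ Finset.univ \ F, min (deriv (h i) x) 0 with hg
  -- key: sum over B \ F of deriv = sum over univ \ F of min deriv 0, when it matters
  have key : ∀ (x : ℝ) (F : Finset (Fin n)),
      ∑ i ∈ (Finset.univ.filter (fun i => deriv (h i) x < 0)) \ F, deriv (h i) x = g F x := by
    intro x F
    rw [hg]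
    rw [show (Finset.univ.filter (fun i => deriv (h i) x < 0)) \ F
        = (Finset.univ \ F).filter (fun i => deriv (h i) x < 0) by
      ext i; simp [Finset.mem_sdiff, Finset.mem_filter, and_comm, and_assoc]]
    rw [Finset.sum_filter]
    refine Finset.sum_congr rfl fun i _ => ?_
    by_cases hi : deriv (h i) x < 0
    · simp [hi, min_eq_left hi.le]
    · simp [hi, min_eq_right (not_lt.1 hi)]
  -- G equals the sup' of the g's
  have hGeq : G = fun x => S.sup' hSne (fun F => g F x) := by
    funext x
    apply le_antisymm
    · obtain ⟨F₂, hF₂B, hF₂c, hsum⟩ := (hG x).1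
      rw [hsum, key x F₂]
      exact Finset.le_sup' (fun F => g F x) (by simp [hS, hF₂c])
    · refine Finset.sup'_le _ _ fun F hF => ?_
      have hFc : F.card ≤ f := by simpa [hS] using hF
      have : g F x ∈ {s : ℝ | ∃ F₂ : Finset (Fin n),
          F₂ ⊆ Finset.univ.filter (fun i => deriv (h i) x < 0) ∧ F₂.card ≤ f ∧
          s = ∑ i ∈ (Finset.univ.filter (fun i => deriv (h i) x < 0)) \ F₂, deriv (h i) x} := by
        refine ⟨F ∩ Finset.univ.filter (fun i => deriv (h i) x < 0),
          Finset.inter_subset_right, le_trans (Finset.card_le_card Finset.inter_subset_left) hFc, ?_⟩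
        rw [show (Finset.univ.filter (fun i => deriv (h i) x < 0)) \
            (F ∩ Finset.univ.filter (fun i => deriv (h i) x < 0))
            = (Finset.univ.filter (fun i => deriv (h i) x < 0)) \ F by
          ext i; simp only [Finset.mem_sdiff, Finset.mem_filter, Finset.mem_inter, Finset.mem_univ, true_and]; tauto]
        exact (key x F).symm
      exact (hG x).2 this
  rw [hGeq]
  refine Continuous.finset_sup'_apply hSne fun F _ => ?_
  exact continuous_finset_sum _ fun i _ =>
    (((hsmooth i).continuous_deriv le_rfl)).min continuous_const
end

section
/- Let N be a finite nonempty index set, and for each i ∈ N let h_i : ℝ → ℝ be convex and continuously differentiable with nonempty compact set of minimizers X_i = argmin h_i. Let α_i ≥ 0 with Σ_{i∈N} α_i = 1. Then every minimizer of Σ_{i∈N} α_i h_i lies in the convex hull of ∪_{i∈N} X_i. -/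
/-- Right-side strictness: if `w` is a global minimizer of a convex `f`,
`w ≤ b < x`, and `x` is not a minimizer, then `f b < f x`. -/
lemma aux_right (f : ℝ → ℝ) (hf : ConvexOn ℝ Set.univ f) (w b x : ℝ)
    (hw : ∀ y, f w ≤ f y) (hwb : w ≤ b) (hbx : b < x)
    (hxnot : ¬ ∀ y, f x ≤ f y) : f b < f x := by
  have hwx : w < x := lt_of_le_of_lt hwb hbx
  have hd : (0:ℝ) < x - w := by linarith
  set l : ℝ := (x - b) / (x - w) with hl
  set m : ℝ := (b - w) / (x - w) with hm
  have hl0 : 0 ≤ l := by apply div_nonneg <;> linarith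
  have hm0 : 0 ≤ m := by apply div_nonneg <;> linarith
  have hlm : l + m = 1 := by
    rw [hl, hm, ← add_div]; exact (div_eq_one_iff_eq hd.ne').2 (by ring)
  have hb : l • w + m • x = b := by
    simp only [smul_eq_mul, hl, hm]
    field_simp
    ring
  have hconv := hf.2 (Set.mem_univ w) (Set.mem_univ x) hl0 hm0 hlm
  rw [hb] at hconv
  simp only [smul_eq_mul] at hconv
  by_contra hle
  push_neg at hle
  -- f x ≤ f b ≤ l f w + m f x, with l + m = 1 ⇒ l (f x - f w) ≤ 0, l > 0
  have hlpos : 0 < l := by apply div_pos <;> linarith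
  have hfxw : f x ≤ f w := by
    by_contra hgt
    push_neg at hgt
    have h1 : 0 < l * (f x - f w) := mul_pos hlpos (by linarith)
    have hm' : m = 1 - l := by linarith
    rw [hm'] at hconv
    nlinarith [h1, hconv, hle]
  exact hxnot (fun y => le_trans hfxw (hw y))

/-- Left-side strictness. -/
lemma aux_left (f : ℝ → ℝ) (hf : ConvexOn ℝ Set.univ f) (w b x : ℝ)
    (hw : ∀ y, f w ≤ f y) (hbw : b ≤ w) (hxb : x < b)
    (hxnot : ¬ ∀ y, f x ≤ f y) : f b < f x := by
  have hxw : x < w := lt_of_lt_of_le hxb hbw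
  have hd : (0:ℝ) < w - x := by linarith
  set l : ℝ := (b - x) / (w - x) with hl
  set m : ℝ := (w - b) / (w - x) with hm
  have hl0 : 0 ≤ l := by apply div_nonneg <;> linarith
  have hm0 : 0 ≤ m := by apply div_nonneg <;> linarith
  have hlm : l + m = 1 := by rw [hl, hm, ← add_div]; exact (div_eq_one_iff_eq hd.ne').2 (by ring)
  have hb : l • w + m • x = b := by
    simp only [smul_eq_mul, hl, hm]
    field_simp
    ring
  have hconv := hf.2 (Set.mem_univ w) (Set.mem_univ x) hl0 hm0 hlm
  rw [hb] at hconv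
  simp only [smul_eq_mul] at hconv
  by_contra hle
  push_neg at hle
  have hlpos : 0 < l := by apply div_pos <;> linarith
  have hfxw : f x ≤ f w := by
    by_contra hgt
    push_neg at hgt
    have h1 : 0 < l * (f x - f w) := mul_pos hlpos (by linarith)
    have hm' : m = 1 - l := by linarith
    rw [hm'] at hconv
    nlinarith [h1, hconv, hle]
  exact hxnot (fun y => le_trans hfxw (hw y))

/-- Every minimizer of a convex combination of admissible functions lies in the
convex hull of the union of the individual minimizer sets. -/
theorem minimizer_in_convexHull_of_argmins
    {ι : Type*} [Fintype ι] [Nonempty ι] (h : ι → ℝ → ℝ)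
    (hconv : ∀ i, ConvexOn ℝ Set.univ (h i))
    (hsmooth : ∀ i, ContDiff ℝ 1 (h i))
    (hne : ∀ i, {x : ℝ | ∀ y : ℝ, h i x ≤ h i y}.Nonempty)
    (hcpt : ∀ i, IsCompact {x : ℝ | ∀ y : ℝ, h i x ≤ h i y})
    (α : ι → ℝ) (hα : ∀ i, 0 ≤ α i) (hsum : ∑ i, α i = 1)
    (x : ℝ) (hx : ∀ y : ℝ, ∑ i, α i * h i x ≤ ∑ i, α i * h i y) :
    x ∈ convexHull ℝ (⋃ i, {z : ℝ | ∀ y : ℝ, h i z ≤ h i y}) := by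
  set X : ι → Set ℝ := fun i => {z : ℝ | ∀ y : ℝ, h i z ≤ h i y} with hX
  -- sup and inf of each minimizer set
  have hBmem : ∀ i, sSup (X i) ∈ X i := fun i => (hcpt i).sSup_mem (hne i)
  have hAmem : ∀ i, sInf (X i) ∈ X i := fun i => (hcpt i).sInf_mem (hne i)
  -- choose global extremes
  obtain ⟨i1, -, hi1⟩ := Finset.exists_max_image Finset.univ (fun i => sSup (X i))
    Finset.univ_nonempty
  obtain ⟨i0, -, hi0⟩ := Finset.exists_min_image Finset.univ (fun i => sInf (X i))
    Finset.univ_nonempty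
  set b : ℝ := sSup (X i1) with hbdef
  set a : ℝ := sInf (X i0) with hadef
  -- some α j is positive
  have hj : ∃ j, 0 < α j := by
    by_contra hc
    push_neg at hc
    have : ∑ i, α i ≤ 0 := Finset.sum_nonpos (fun i _ => hc i)
    linarith
  obtain ⟨j, hjpos⟩ := hj
  -- x ≤ b
  have hxb : x ≤ b := by
    by_contra hc
    push_neg at hc
    have hstrict : ∀ i, h i b < h i x := by
      intro i
      obtain ⟨w, hw⟩ := hne i
      have hwb : w ≤ b := by
        have h1 : w ≤ sSup (X i) := le_csSup (hcpt i).bddAbove hw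
        exact le_trans h1 (hi1 i (Finset.mem_univ i))
      have hxnot : ¬ ∀ y, h i x ≤ h i y := by
        intro hxm
        have : x ≤ sSup (X i) := le_csSup (hcpt i).bddAbove hxm
        have := le_trans this (hi1 i (Finset.mem_univ i))
        linarith
      exact aux_right (h i) (hconv i) w b x hw hwb hc hxnot
    have hlt : ∑ i, α i * h i b < ∑ i, α i * h i x := by
      apply Finset.sum_lt_sum
      · exact fun i _ => mul_le_mul_of_nonneg_left (le_of_lt (hstrict i)) (hα i)
      · exact ⟨j, Finset.mem_univ j, mul_lt_mul_of_pos_left (hstrict j) hjpos⟩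
    exact absurd (hx b) (not_le.mpr hlt)
  -- a ≤ x
  have hax : a ≤ x := by
    by_contra hc
    push_neg at hc
    have hstrict : ∀ i, h i a < h i x := by
      intro i
      obtain ⟨w, hw⟩ := hne i
      have haw : a ≤ w := by
        have h1 : sInf (X i) ≤ w := csInf_le (hcpt i).bddBelow hw
        exact le_trans (hi0 i (Finset.mem_univ i)) h1
      have hxnot : ¬ ∀ y, h i x ≤ h i y := by
        intro hxm
        have : sInf (X i) ≤ x := csInf_le (hcpt i).bddBelow hxm
        have := le_trans (hi0 i (Finset.mem_univ i)) this
        linarith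
      exact aux_left (h i) (hconv i) w a x hw haw hc hxnot
    have hlt : ∑ i, α i * h i a < ∑ i, α i * h i x := by
      apply Finset.sum_lt_sum
      · exact fun i _ => mul_le_mul_of_nonneg_left (le_of_lt (hstrict i)) (hα i)
      · exact ⟨j, Finset.mem_univ j, mul_lt_mul_of_pos_left (hstrict j) hjpos⟩
    exact absurd (hx a) (not_le.mpr hlt)
  -- conclude via the segment [a, b]
  have hamem : a ∈ convexHull ℝ (⋃ i, X i) :=
    subset_convexHull ℝ _ (Set.mem_iUnion.2 ⟨i0, hAmem i0⟩)
  have hbmem : b ∈ convexHull ℝ (⋃ i, X i) :=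
    subset_convexHull ℝ _ (Set.mem_iUnion.2 ⟨i1, hBmem i1⟩)
  have hab : a ≤ b := le_trans hax hxb
  have hseg : segment ℝ a b ⊆ convexHull ℝ (⋃ i, X i) :=
    (convex_convexHull ℝ _).segment_subset hamem hbmem
  apply hseg
  rw [segment_eq_Icc hab]
  exact ⟨hax, hxb⟩
end

section
/- Let h_1, ..., h_n : ℝ → ℝ be convex, continuously differentiable functions, each with a nonempty compact set of minimizers, and suppose n > 3f. For 1 ≤ K ≤ n, let g_K(x) be the K-th largest value in the multiset {h_1'(x), ..., h_n'(x)}. Then there exists x̃ ∈ ℝ such that Σ_{K=f+1}^{n−f} g_K(x̃) = 0. -/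
open scoped Classical

/-- There is a point where the sum of the middle `n - 2f` ranked derivatives vanishes.
`g K x` is the `K`-th largest value (with multiplicity) of `{h₁'(x), …, hₙ'(x)}`. -/
theorem exists_zero_of_middle_rank_gradient_sum
    (n f : ℕ) (hnf : 3 * f < n) (h : Fin n → ℝ → ℝ)
    (hconv : ∀ i, ConvexOn ℝ Set.univ (h i))
    (hsmooth : ∀ i, ContDiff ℝ 1 (h i))
    (hne : ∀ i, {x : ℝ | ∀ y : ℝ, h i x ≤ h i y}.Nonempty)
    (hcpt : ∀ i, IsCompact {x : ℝ | ∀ y : ℝ, h i x ≤ h i y})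
    (g : ℕ → ℝ → ℝ)
    (hg : ∀ K, f + 1 ≤ K → K ≤ n - f → ∀ x : ℝ,
      K ≤ (Finset.univ.filter (fun i => g K x ≤ deriv (h i) x)).card ∧
      (Finset.univ.filter (fun i => g K x < deriv (h i) x)).card < K) :
    ∃ x : ℝ, ∑ K ∈ Finset.Icc (f + 1) (n - f), g K x = 0 := by
  have hn0 : 0 < n := by omega
  haveI : Nonempty (Fin n) := ⟨⟨0, hn0⟩⟩
  set d : Fin n → ℝ → ℝ := fun i x => deriv (h i) x with hd
  have hdcont : ∀ i, Continuous (d i) := fun i =>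
    (hsmooth i).continuous_deriv le_rfl
  have hdmono : ∀ i, Monotone (d i) := by
    intro i
    have := (hconv i).monotoneOn_deriv (fun x _ => ((hsmooth i).differentiable one_ne_zero).differentiableAt)
    intro a b hab
    exact this (Set.mem_univ a) (Set.mem_univ b) hab
  -- choose minimizers
  have hm : ∀ i, ∃ m : ℝ, d i m = 0 := by
    intro i
    obtain ⟨m, hm⟩ := hne i
    refine ⟨m, ?_⟩
    have : IsLocalMin (h i) m := by
      apply IsMinOn.isLocalMin (s := Set.univ)
      · intro y _; exact hm y
      · exact Filter.univ_mem
    exact this.deriv_eq_zero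
  choose m hm0 using hm
  set a := Finset.univ.inf' Finset.univ_nonempty m with ha
  set b := Finset.univ.sup' Finset.univ_nonempty m with hb
  have hab : a ≤ b := le_trans (Finset.inf'_le _ (Finset.mem_univ (Classical.arbitrary (Fin n))))
    (Finset.le_sup' _ (Finset.mem_univ _))
  have hda : ∀ i, d i a ≤ 0 := fun i => by
    calc d i a ≤ d i (m i) := hdmono i (Finset.inf'_le _ (Finset.mem_univ i))
    _ = 0 := hm0 i
  have hdb : ∀ i, 0 ≤ d i b := fun i => by
    calc (0:ℝ) = d i (m i) := (hm0 i).symm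
    _ ≤ d i b := hdmono i (Finset.le_sup' _ (Finset.mem_univ i))
  -- key characterizations of g K
  have key_ge : ∀ K, f + 1 ≤ K → K ≤ n - f → ∀ x c,
      K ≤ (Finset.univ.filter (fun i => c ≤ d i x)).card → c ≤ g K x := by
    intro K h1 h2 x c hc
    by_contra hlt
    push_neg at hlt
    have hsub : (Finset.univ.filter (fun i => c ≤ d i x)) ⊆
        (Finset.univ.filter (fun i => g K x < d i x)) := by
      intro i hi
      simp only [Finset.mem_filter, Finset.mem_univ, true_and] at hi ⊢
      exact lt_of_lt_of_le hlt hi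
    have hA : (Finset.univ.filter (fun i => g K x < d i x)).card < K := (hg K h1 h2 x).2
    have := Finset.card_le_card hsub
    omega
  have key_le : ∀ K, f + 1 ≤ K → K ≤ n - f → ∀ x c,
      (Finset.univ.filter (fun i => c < d i x)).card < K → g K x ≤ c := by
    intro K h1 h2 x c hc
    by_contra hlt
    push_neg at hlt
    have hsub : (Finset.univ.filter (fun i => g K x ≤ d i x)) ⊆
        (Finset.univ.filter (fun i => c < d i x)) := by
      intro i hi
      simp only [Finset.mem_filter, Finset.mem_univ, true_and] at hi ⊢
      exact lt_of_lt_of_le hlt hi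
    have hA : K ≤ (Finset.univ.filter (fun i => g K x ≤ d i x)).card := (hg K h1 h2 x).1
    have := Finset.card_le_card hsub
    omega
  -- continuity of g K
  have hgcont : ∀ K ∈ Finset.Icc (f + 1) (n - f), Continuous (g K) := by
    intro K hK
    rw [Finset.mem_Icc] at hK
    obtain ⟨h1, h2⟩ := hK
    rw [Metric.continuous_iff]
    intro x₀ ε hε
    have : ∀ i, ∃ δ > 0, ∀ x, dist x x₀ < δ → dist (d i x) (d i x₀) < ε / 2 := by
      intro i
      have := (Metric.continuous_iff.mp (hdcont i)) x₀ (ε / 2) (by linarith)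
      exact this
    choose δ hδpos hδ using this
    refine ⟨Finset.univ.inf' Finset.univ_nonempty δ, ?_, ?_⟩
    · exact (Finset.lt_inf'_iff _).2 fun i _ => hδpos i
    · intro x hx
      have hdd : ∀ i, dist (d i x) (d i x₀) < ε / 2 := by
        intro i
        exact hδ i x (lt_of_lt_of_le hx (Finset.inf'_le _ (Finset.mem_univ i)))
      have h1' : g K x₀ - ε / 2 ≤ g K x := by
        apply key_ge K h1 h2 x _
        refine le_trans (hg K h1 h2 x₀).1 (Finset.card_le_card ?_)
        intro i hi
        simp only [Finset.mem_filter, Finset.mem_univ, true_and] at hi ⊢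
        have := (abs_lt.mp (hdd i)).1
        simp only [Real.dist_eq] at hdd
        have := (abs_lt.mp (hdd i)).1
        linarith
      have h2' : g K x ≤ g K x₀ + ε / 2 := by
        apply key_le K h1 h2 x _
        refine lt_of_le_of_lt (Finset.card_le_card ?_) (hg K h1 h2 x₀).2
        intro i hi
        simp only [Finset.mem_filter, Finset.mem_univ, true_and] at hi ⊢
        simp only [Real.dist_eq] at hdd
        have := (abs_lt.mp (hdd i)).2
        linarith
      rw [Real.dist_eq, abs_lt]
      constructor <;> linarith
  -- signs at a and b
  have hKn : ∀ K, f + 1 ≤ K → K ≤ n - f → 0 < K ∧ K ≤ n := fun K hk1 hk2 => ⟨by omega, by omega⟩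
  have hga : ∀ K ∈ Finset.Icc (f + 1) (n - f), g K a ≤ 0 := by
    intro K hK
    rw [Finset.mem_Icc] at hK
    apply key_le K hK.1 hK.2 a 0
    have : (Finset.univ.filter (fun i => (0:ℝ) < d i a)) = ∅ := by
      apply Finset.filter_false_of_mem
      intro i _
      exact not_lt.mpr (hda i)
    rw [this]
    simpa using (hKn K hK.1 hK.2).1
  have hgb : ∀ K ∈ Finset.Icc (f + 1) (n - f), 0 ≤ g K b := by
    intro K hK
    rw [Finset.mem_Icc] at hK
    apply key_ge K hK.1 hK.2 b 0
    have : (Finset.univ.filter (fun i => (0:ℝ) ≤ d i b)) = Finset.univ := by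
      apply Finset.filter_true_of_mem
      intro i _
      exact hdb i
    rw [this, Finset.card_univ, Fintype.card_fin]
    exact (hKn K hK.1 hK.2).2
  -- IVT
  set F : ℝ → ℝ := fun x => ∑ K ∈ Finset.Icc (f + 1) (n - f), g K x with hF
  have hFcont : Continuous F := by
    apply continuous_finset_sum
    intro K hK
    exact hgcont K hK
  have hFa : F a ≤ 0 := Finset.sum_nonpos hga
  have hFb : 0 ≤ F b := Finset.sum_nonneg hgb
  have := intermediate_value_Icc hab hFcont.continuousOn
  obtain ⟨x, _, hx⟩ := this ⟨hFa, hFb⟩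
  exact ⟨x, hx⟩
end

section
/- Let h_1, ..., h_n : ℝ → ℝ be convex, continuously differentiable functions, each with nonempty compact argmin set, and suppose n > 3f. Define H(x) = F(x) + G(x) where F(x) = min_{F₁⊆A(x),|F₁|≤f} Σ_{i∈A(x)−F₁} h_i'(x) with A(x) = {i : h_i'(x) > 0}, and G(x) = max_{F₂⊆B(x),|F₂|≤f} Σ_{i∈B(x)−F₂} h_i'(x) with B(x) = {i : h_i'(x) < 0}. Then there exists x̃ ∈ ℝ such that H(x̃) = 0. -/
open scoped Classical

lemma trim_sum_pos_eq (n : ℕ) (d : Fin n → ℝ) (S : Finset (Fin n)) :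
    ∑ i ∈ (Finset.univ.filter (fun i => 0 < d i)) \ S, d i
      = ∑ i ∈ Sᶜ, max (d i) 0 := by
  have h1 : (Finset.univ.filter (fun i => 0 < d i)) \ S
      = Sᶜ.filter (fun i => 0 < d i) := by
    ext i; simp [Finset.mem_sdiff, Finset.mem_filter, Finset.mem_compl]; tauto
  rw [h1, Finset.sum_filter]
  refine Finset.sum_congr rfl fun i _ => ?_
  by_cases hd : 0 < d i
  · simp [hd, max_eq_left hd.le]
  · simp [hd, max_eq_right (le_of_not_gt hd)]

lemma trim_sum_neg_eq (n : ℕ) (d : Fin n → ℝ) (S : Finset (Fin n)) :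
    ∑ i ∈ (Finset.univ.filter (fun i => d i < 0)) \ S, d i
      = ∑ i ∈ Sᶜ, min (d i) 0 := by
  have h1 : (Finset.univ.filter (fun i => d i < 0)) \ S
      = Sᶜ.filter (fun i => d i < 0) := by
    ext i; simp [Finset.mem_sdiff, Finset.mem_filter, Finset.mem_compl]; tauto
  rw [h1, Finset.sum_filter]
  refine Finset.sum_congr rfl fun i _ => ?_
  by_cases hd : d i < 0
  · simp [hd, min_eq_left hd.le]
  · simp [hd, min_eq_right (le_of_not_gt hd)]

/-- There exists a point where `H = F + G` vanishes, where `F` and `G` are the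
trimmed positive and negative gradient sums. -/
theorem exists_zero_of_trimmed_gradient_sum
    (n f : ℕ) (hnf : 3 * f < n) (h : Fin n → ℝ → ℝ)
    (hconv : ∀ i, ConvexOn ℝ Set.univ (h i))
    (hsmooth : ∀ i, ContDiff ℝ 1 (h i))
    (hne : ∀ i, {x : ℝ | ∀ y : ℝ, h i x ≤ h i y}.Nonempty)
    (hcpt : ∀ i, IsCompact {x : ℝ | ∀ y : ℝ, h i x ≤ h i y})
    (F G : ℝ → ℝ)
    (hF : ∀ x : ℝ,
      IsLeast {s : ℝ | ∃ F₁ : Finset (Fin n),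
        F₁ ⊆ Finset.univ.filter (fun i => 0 < deriv (h i) x) ∧ F₁.card ≤ f ∧
        s = ∑ i ∈ (Finset.univ.filter (fun i => 0 < deriv (h i) x)) \ F₁, deriv (h i) x}
        (F x))
    (hG : ∀ x : ℝ,
      IsGreatest {s : ℝ | ∃ F₂ : Finset (Fin n),
        F₂ ⊆ Finset.univ.filter (fun i => deriv (h i) x < 0) ∧ F₂.card ≤ f ∧
        s = ∑ i ∈ (Finset.univ.filter (fun i => deriv (h i) x < 0)) \ F₂, deriv (h i) x}
        (G x)) :
    ∃ x : ℝ, F x + G x = 0 := by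
  have hn : 0 < n := lt_of_le_of_lt (Nat.zero_le _) hnf
  haveI : Nonempty (Fin n) := ⟨⟨0, hn⟩⟩
  -- continuity of the derivatives
  have hderiv_cont : ∀ i, Continuous (deriv (h i)) := fun i =>
    (hsmooth i).continuous_deriv le_rfl
  have hdiff : ∀ i, Differentiable ℝ (h i) := fun i =>
    (hsmooth i).differentiable one_ne_zero
  -- the family of candidate removal sets
  set 𝒮 : Finset (Finset (Fin n)) :=
    Finset.univ.powerset.filter (fun S => S.card ≤ f) with h𝒮
  have h𝒮ne : 𝒮.Nonempty := ⟨∅, by simp [h𝒮]⟩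
  have hmem𝒮 : ∀ S : Finset (Fin n), S.card ≤ f → S ∈ 𝒮 := fun S hS => by
    simp [h𝒮, hS, Finset.subset_univ]
  -- F as a finite inf'
  have hFeq : ∀ x, F x = 𝒮.inf' h𝒮ne (fun S => ∑ i ∈ Sᶜ, max (deriv (h i) x) 0) := by
    intro x
    refine le_antisymm ?_ ?_
    · obtain ⟨S₀, hS₀mem, hS₀⟩ := Finset.exists_mem_eq_inf' h𝒮ne
        (fun S => ∑ i ∈ Sᶜ, max (deriv (h i) x) 0)
    -- F x ≤ value at S₀ since the value is in the set
      rw [hS₀]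
      refine (hF x).2 ?_
      refine ⟨S₀ ∩ Finset.univ.filter (fun i => 0 < deriv (h i) x), Finset.inter_subset_right, ?_, ?_⟩
      · exact le_trans (Finset.card_le_card Finset.inter_subset_left)
          ((Finset.mem_filter.1 hS₀mem).2)
      · have : (Finset.univ.filter (fun i => 0 < deriv (h i) x))
            \ (S₀ ∩ Finset.univ.filter (fun i => 0 < deriv (h i) x))
            = (Finset.univ.filter (fun i => 0 < deriv (h i) x)) \ S₀ := by
          ext i
          simp only [Finset.mem_sdiff, Finset.mem_inter, Finset.mem_filter]
          tauto
        rw [this, trim_sum_pos_eq]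
    · obtain ⟨F₁, hF₁sub, hF₁card, hF₁val⟩ := (hF x).1
      rw [hF₁val, trim_sum_pos_eq]
      exact Finset.inf'_le _ (hmem𝒮 F₁ hF₁card)
  -- G as a finite sup'
  have hGeq : ∀ x, G x = 𝒮.sup' h𝒮ne (fun S => ∑ i ∈ Sᶜ, min (deriv (h i) x) 0) := by
    intro x
    refine le_antisymm ?_ ?_
    · obtain ⟨F₂, hF₂sub, hF₂card, hF₂val⟩ := (hG x).1
      rw [hF₂val, trim_sum_neg_eq]
      exact Finset.le_sup' (fun S => ∑ i ∈ Sᶜ, min (deriv (h i) x) 0) (hmem𝒮 F₂ hF₂card)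
    · obtain ⟨S₀, hS₀mem, hS₀⟩ := Finset.exists_mem_eq_sup' h𝒮ne
        (fun S => ∑ i ∈ Sᶜ, min (deriv (h i) x) 0)
      rw [hS₀]
      refine (hG x).2 ?_
      refine ⟨S₀ ∩ Finset.univ.filter (fun i => deriv (h i) x < 0), Finset.inter_subset_right, ?_, ?_⟩
      · exact le_trans (Finset.card_le_card Finset.inter_subset_left)
          ((Finset.mem_filter.1 hS₀mem).2)
      · have : (Finset.univ.filter (fun i => deriv (h i) x < 0))
            \ (S₀ ∩ Finset.univ.filter (fun i => deriv (h i) x < 0))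
            = (Finset.univ.filter (fun i => deriv (h i) x < 0)) \ S₀ := by
          ext i
          simp only [Finset.mem_sdiff, Finset.mem_inter, Finset.mem_filter]
          tauto
        rw [this, trim_sum_neg_eq]
  -- continuity of F and G
  have hFcont : Continuous F := by
    have : Continuous fun x => 𝒮.inf' h𝒮ne (fun S => ∑ i ∈ Sᶜ, max (deriv (h i) x) 0) := by
      apply Continuous.finset_inf'_apply h𝒮ne
      intro S _
      exact continuous_finset_sum _ fun i _ => (hderiv_cont i).max continuous_const
    exact (funext hFeq : F = _) ▸ this
  have hGcont : Continuous G := by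
    have : Continuous fun x => 𝒮.sup' h𝒮ne (fun S => ∑ i ∈ Sᶜ, min (deriv (h i) x) 0) := by
      apply Continuous.finset_sup'_apply h𝒮ne
      intro S _
      exact continuous_finset_sum _ fun i _ => (hderiv_cont i).min continuous_const
    exact (funext hGeq : G = _) ▸ this
  -- minimizers
  choose m hm using hne
  -- derivative vanishes at minimizers
  have hderiv_zero : ∀ i, deriv (h i) (m i) = 0 := by
    intro i
    have : IsLocalMin (h i) (m i) := by
      apply IsMinOn.isLocalMin (s := Set.univ)
      · intro y _; exact hm i y
      · exact Filter.univ_mem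
    exact this.deriv_eq_zero
  -- monotonicity of derivatives
  have hmono : ∀ i, Monotone (deriv (h i)) := by
    intro i
    have := (hconv i).monotoneOn_deriv (fun x _ => (hdiff i).differentiableAt)
    exact monotoneOn_univ.1 this
  set a : ℝ := Finset.univ.inf' Finset.univ_nonempty m with ha
  set b : ℝ := Finset.univ.sup' Finset.univ_nonempty m with hb
  have hab : a ≤ b := by
    obtain ⟨i⟩ := (inferInstance : Nonempty (Fin n))
    exact le_trans (Finset.inf'_le m (Finset.mem_univ i))
      (Finset.le_sup' m (Finset.mem_univ i))
  -- at a, all derivatives ≤ 0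
  have hda : ∀ i, deriv (h i) a ≤ 0 := fun i => by
    rw [← hderiv_zero i]
    exact hmono i (Finset.inf'_le m (Finset.mem_univ i))
  have hdb : ∀ i, 0 ≤ deriv (h i) b := fun i => by
    rw [← hderiv_zero i]
    exact hmono i (Finset.le_sup' m (Finset.mem_univ i))
  -- F a = 0
  have hFa : F a = 0 := by
    have hAempty : Finset.univ.filter (fun i => 0 < deriv (h i) a) = ∅ := by
      apply Finset.filter_eq_empty_iff.2
      intro i _
      exact not_lt.2 (hda i)
    obtain ⟨F₁, hF₁sub, _, hF₁val⟩ := (hF a).1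
    rw [hF₁val, hAempty]
    simp
  have hGb : G b = 0 := by
    have hBempty : Finset.univ.filter (fun i => deriv (h i) b < 0) = ∅ := by
      apply Finset.filter_eq_empty_iff.2
      intro i _
      exact not_lt.2 (hdb i)
    obtain ⟨F₂, hF₂sub, _, hF₂val⟩ := (hG b).1
    rw [hF₂val, hBempty]
    simp
  -- G a ≤ 0
  have hGa : G a ≤ 0 := by
    obtain ⟨F₂, hF₂sub, _, hF₂val⟩ := (hG a).1
    rw [hF₂val]
    apply Finset.sum_nonpos
    intro i hi
    exact (hda i)
  have hFb : 0 ≤ F b := by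
    obtain ⟨F₁, hF₁sub, _, hF₁val⟩ := (hF b).1
    rw [hF₁val]
    apply Finset.sum_nonneg
    intro i hi
    exact (hdb i)
  -- IVT
  have hHcont : ContinuousOn (fun x => F x + G x) (Set.Icc a b) :=
    (hFcont.add hGcont).continuousOn
  have h0mem : (0 : ℝ) ∈ Set.Icc (F a + G a) (F b + G b) := by
    constructor
    · rw [hFa]; linarith
    · rw [hGb]; linarith
  obtain ⟨x, _, hx⟩ := intermediate_value_Icc hab hHcont h0mem
  exact ⟨x, hx⟩
end
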